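/- arXiv:2212.12100 — 3 statements merged into one kernel-verified Lean document; each statement's English description precedes it below -/
import Mathlib

section
/- Let f : X → (−∞, ∞] be a generalized polyhedral convex function, x̄ ∈ dom(f), γ = f(x̄), and L_γ = {x : f(x) ≤ γ}. Then N(x̄; L_γ) = ∪_{λ ≥ 0} λ ⊙ ∂f(x̄), where λ ⊙ ∂f(x̄) = λ∂f(x̄) for λ > 0 and 0 ⊙ ∂f(x̄) = ∂^∞f(x̄) = {x* : (x*, 0) ∈ N((x̄, f(x̄)); epi f)} is the singular subdifferential. -/
open Set Pointwise

def IsPolyhedral {X : Type*} [AddCommGroup X] [Module ℝ X] [TopologicalSpace X]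
    (P : Set X) : Prop :=
  ∃ (m : ℕ) (f : Fin m → X →L[ℝ] ℝ) (α : Fin m → ℝ),
    P = {x : X | ∀ i, f i x ≤ α i}

def IsGPolyhedral {X : Type*} [AddCommGroup X] [Module ℝ X] [TopologicalSpace X]
    (Q : Set X) : Prop :=
  ∃ (P : Set X) (a : X) (L : Submodule ℝ X),
    IsPolyhedral P ∧ IsClosed (L : Set X) ∧ Q = P ∩ (a +ᵥ (L : Set X))

def normalCone {X : Type*} [AddCommGroup X] [Module ℝ X] [TopologicalSpace X]
    (Ω : Set X) (xb : X) : Set (X →L[ℝ] ℝ) :=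
  {f | ∀ x ∈ Ω, f (x - xb) ≤ 0}

def gph {X Y : Type*} (F : X → Set Y) : Set (X × Y) := {p | p.2 ∈ F p.1}

def coderiv {X Y : Type*} [AddCommGroup X] [Module ℝ X] [TopologicalSpace X]
    [AddCommGroup Y] [Module ℝ Y] [TopologicalSpace Y]
    (F : X → Set Y) (xb : X) (yb : Y) (v : Y →L[ℝ] ℝ) : Set (X →L[ℝ] ℝ) :=
  {u | ∀ x : X, ∀ y ∈ F x, u (x - xb) - v (y - yb) ≤ 0}

def epi {X : Type*} (f : X → EReal) : Set (X × ℝ) := {p | f p.1 ≤ (p.2 : EReal)}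

def subdiff {X : Type*} [AddCommGroup X] [Module ℝ X] [TopologicalSpace X]
    (f : X → EReal) (xb : X) : Set (X →L[ℝ] ℝ) :=
  {g | ∀ x : X, ((g (x - xb) : ℝ) : EReal) + f xb ≤ f x}

def singSubdiff {X : Type*} [AddCommGroup X] [Module ℝ X] [TopologicalSpace X]
    (f : X → EReal) (xb : X) : Set (X →L[ℝ] ℝ) :=
  {g | ∀ x : X, ∀ α : ℝ, f x ≤ (α : EReal) → g (x - xb) ≤ 0}

variable {X : Type*} [AddCommGroup X] [Module ℝ X] [TopologicalSpace X]
  [IsTopologicalAddGroup X] [ContinuousSMul ℝ X] [LocallyConvexSpace ℝ X] [T2Space X]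
variable {Y : Type*} [AddCommGroup Y] [Module ℝ Y] [TopologicalSpace Y]
  [IsTopologicalAddGroup Y] [ContinuousSMul ℝ Y] [LocallyConvexSpace ℝ Y] [T2Space Y]
variable {Z : Type*} [AddCommGroup Z] [Module ℝ Z] [TopologicalSpace Z]
  [IsTopologicalAddGroup Z] [ContinuousSMul ℝ Z] [LocallyConvexSpace ℝ Z] [T2Space Z]


lemma farkas_lin {V : Type*} [AddCommGroup V] [Module ℝ V] {ι : Type*}
    (s : Finset ι) (ψ : ι → V →ₗ[ℝ] ℝ) (G : V →ₗ[ℝ] ℝ)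
    (h : ∀ v, (∀ i ∈ s, ψ i v ≤ 0) → G v ≤ 0) :
    ∃ lam : ι → ℝ, (∀ i, 0 ≤ lam i) ∧ ∀ v, G v = ∑ i ∈ s, lam i * ψ i v := by
  classical
  induction s using Finset.induction_on generalizing ψ G with
  | empty =>
    refine ⟨fun _ => 0, fun _ => le_refl 0, fun v => ?_⟩
    simp only [Finset.sum_empty]
    have h1 := h v (by simp)
    have h2 := h (-v) (by simp)
    simp only [map_neg] at h2
    linarith
  | @insert j t hj ih =>
    by_cases hc : ∀ v, (∀ i ∈ t, ψ i v ≤ 0) → G v ≤ 0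
    · obtain ⟨lam, hlam, hG⟩ := ih ψ G hc
      refine ⟨fun i => if i = j then 0 else lam i, fun i => by dsimp; split <;> simp [hlam i],
        fun v => ?_⟩
      rw [Finset.sum_insert hj]; dsimp only; rw [if_pos rfl, hG v, zero_mul, zero_add]
      exact (Finset.sum_congr rfl fun i hi => by
        rw [if_neg (by rintro rfl; exact hj hi)]).symm
    · push_neg at hc
      obtain ⟨v0, hv0t, hv0G⟩ := hc
      have hjv0 : 0 < ψ j v0 := by
        by_contra hle
        push_neg at hle
        refine absurd (h v0 ?_) (not_le.mpr hv0G)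
        intro i hi
        rcases Finset.mem_insert.mp hi with rfl | hi
        · exact hle
        · exact hv0t i hi
      have hjne : ψ j v0 ≠ 0 := ne_of_gt hjv0
      set ψ' : ι → V →ₗ[ℝ] ℝ := fun i => ψ i - (ψ i v0 / ψ j v0) • ψ j with hψ'
      set G' : V →ₗ[ℝ] ℝ := G - (G v0 / ψ j v0) • ψ j with hG'
      have hstep : ∀ v, (∀ i ∈ t, ψ' i v ≤ 0) → G' v ≤ 0 := by
        intro v hv
        have hmain := h (v - (ψ j v / ψ j v0) • v0) ?_
        · simp only [map_sub, map_smul, smul_eq_mul] at hmain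
          simp only [hG', LinearMap.sub_apply, LinearMap.smul_apply, smul_eq_mul]
          have heq : (G v0 / ψ j v0) * ψ j v = ψ j v / ψ j v0 * G v0 := by
            field_simp
          linarith
        · intro i hi
          rcases Finset.mem_insert.mp hi with rfl | hi
          · simp only [map_sub, map_smul, smul_eq_mul]
            have : ψ i v / ψ i v0 * ψ i v0 = ψ i v := by field_simp
            linarith
          · have := hv i hi
            simp only [hψ', LinearMap.sub_apply, LinearMap.smul_apply, smul_eq_mul] at this
            simp only [map_sub, map_smul, smul_eq_mul]
            have heq : ψ i v0 / ψ j v0 * ψ j v = ψ j v / ψ j v0 * ψ i v0 := by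
              field_simp
            linarith
      obtain ⟨mu, hmu, hsum⟩ := ih ψ' G' hstep
      refine ⟨fun i => if i = j then G v0 / ψ j v0 - ∑ i ∈ t, mu i * (ψ i v0 / ψ j v0)
        else mu i, fun i => ?_, fun v => ?_⟩
      · dsimp only
        split
        · have h1 : 0 < G v0 / ψ j v0 := div_pos hv0G hjv0
          have h2 : ∑ i ∈ t, mu i * (ψ i v0 / ψ j v0) ≤ 0 := by
            apply Finset.sum_nonpos
            intro i hi
            exact mul_nonpos_of_nonneg_of_nonpos (hmu i)
              (div_nonpos_of_nonpos_of_nonneg (hv0t i hi) (le_of_lt hjv0))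
          linarith
        · exact hmu i
      · rw [Finset.sum_insert hj]; dsimp only; rw [if_pos rfl]
        have h1 := hsum v
        simp only [hG', hψ', LinearMap.sub_apply, LinearMap.smul_apply, smul_eq_mul] at h1
        have h2 : ∑ i ∈ t, mu i * (ψ i v - ψ i v0 / ψ j v0 * ψ j v)
            = ∑ i ∈ t, mu i * ψ i v - (∑ i ∈ t, mu i * (ψ i v0 / ψ j v0)) * ψ j v := by
          rw [Finset.sum_mul, ← Finset.sum_sub_distrib]
          exact Finset.sum_congr rfl fun i _ => by ring
        rw [h2] at h1
        have h3 : ∑ i ∈ t, (if i = j then G v0 / ψ j v0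
            - ∑ i ∈ t, mu i * (ψ i v0 / ψ j v0) else mu i) * ψ i v
            = ∑ i ∈ t, mu i * ψ i v :=
          Finset.sum_congr rfl fun i hi => by rw [if_neg (by rintro rfl; exact hj hi)]
        rw [h3, sub_mul]
        linarith

lemma exists_pos_le {m : ℕ} (F : Fin m → ℝ) (hF : ∀ i, 0 < F i) :
    ∃ τ : ℝ, 0 < τ ∧ ∀ i, τ ≤ F i := by
  rcases isEmpty_or_nonempty (Fin m) with he | hne
  · exact ⟨1, one_pos, fun i => isEmptyElim i⟩
  · obtain ⟨i0, -, hi0⟩ := Finset.exists_min_image Finset.univ F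
      ⟨Classical.arbitrary _, Finset.mem_univ _⟩
    exact ⟨F i0, hF i0, fun i => hi0 i (Finset.mem_univ i)⟩

lemma key_mu {X : Type*} [AddCommGroup X] [Module ℝ X] [TopologicalSpace X]
    (f : X → EReal) (hf : IsGPolyhedral (epi f)) (xb : X) (γ : ℝ)
    (hγ : f xb = (γ : EReal)) (g : X →L[ℝ] ℝ)
    (hg : ∀ x, f x ≤ (γ : EReal) → g (x - xb) ≤ 0) :
    ∃ μ : ℝ, 0 ≤ μ ∧ ∀ x, ∀ t : ℝ, f x ≤ (t : EReal) → g (x - xb) ≤ μ * (t - γ) := by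
  classical
  obtain ⟨P, a, W, ⟨m, Φ, c, hP⟩, -, hepi⟩ := hf
  set p0 : X × ℝ := (xb, γ) with hp0def
  have hp0 : p0 ∈ epi f := by simp [epi, p0, hγ]
  rw [hepi] at hp0
  obtain ⟨hp0P, hp0W⟩ := hp0
  obtain ⟨w0, hw0, hw0eq⟩ := hp0W
  have hp0P' : ∀ i, Φ i p0 ≤ c i := by rw [hP] at hp0P; exact hp0P
  -- functionals on W
  set Ψ : Option (Fin m) → (↥W →ₗ[ℝ] ℝ) := fun o =>
    Option.rec ((LinearMap.snd ℝ X ℝ).comp W.subtype)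
      (fun i => ((Φ i : (X × ℝ) →ₗ[ℝ] ℝ)).comp W.subtype) o with hΨ
  set G : ↥W →ₗ[ℝ] ℝ :=
    ((g : X →ₗ[ℝ] ℝ).comp (LinearMap.fst ℝ X ℝ)).comp W.subtype with hG
  set A : Finset (Fin m) := Finset.univ.filter (fun i => Φ i p0 = c i) with hA
  set s : Finset (Option (Fin m)) :=
    insert none (A.image some) with hs
  have hfar : ∀ v : ↥W, (∀ i ∈ s, Ψ i v ≤ 0) → G v ≤ 0 := by
    intro d hd
    have hdt : (d : X × ℝ).2 ≤ 0 := hd none (Finset.mem_insert_self _ _)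
    have hact : ∀ i : Fin m, Φ i p0 = c i → Φ i (d : X × ℝ) ≤ 0 := by
      intro i hi
      exact hd (some i) (Finset.mem_insert_of_mem
        (Finset.mem_image_of_mem some (Finset.mem_filter.mpr ⟨Finset.mem_univ i, hi⟩)))
    -- choose step size τ
    set F : Fin m → ℝ := fun i =>
      if h : 0 < Φ i (d : X × ℝ) ∧ Φ i p0 < c i
      then (c i - Φ i p0) / (Φ i (d : X × ℝ)) else 1 with hF
    have hFpos : ∀ i, 0 < F i := by
      intro i
      rw [hF]
      dsimp only
      split
      · next h => exact div_pos (by linarith [h.2]) h.1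
      · exact one_pos
    obtain ⟨τ, hτpos, hτle⟩ := exists_pos_le F hFpos
    have hfeas : ∀ i, Φ i (p0 + τ • (d : X × ℝ)) ≤ c i := by
      intro i
      rw [map_add, map_smul, smul_eq_mul]
      by_cases hia : Φ i p0 = c i
      · have h1 := hact i hia
        nlinarith
      · have hlt : Φ i p0 < c i := lt_of_le_of_ne (hp0P' i) hia
        by_cases hd2 : 0 < Φ i (d : X × ℝ)
        · have h1 := hτle i
          rw [hF] at h1
          dsimp only at h1
          rw [dif_pos ⟨hd2, hlt⟩] at h1
          have := (le_div_iff₀ hd2).mp h1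
          linarith
        · push_neg at hd2
          have : τ * Φ i (d : X × ℝ) ≤ 0 :=
            mul_nonpos_of_nonneg_of_nonpos (le_of_lt hτpos) hd2
          linarith
    have hmem : p0 + τ • (d : X × ℝ) ∈ epi f := by
      rw [hepi]
      constructor
      · rw [hP]; exact hfeas
      · refine Set.mem_vadd_set.mpr ⟨w0 + τ • (d : X × ℝ),
          W.add_mem hw0 (W.smul_mem τ d.2), ?_⟩
        simp only [vadd_eq_add] at hw0eq ⊢
        rw [← add_assoc, hw0eq]
    have hx' : f (xb + τ • (d : X × ℝ).1) ≤ ((γ + τ * (d : X × ℝ).2 : ℝ) : EReal) := by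
      have : (p0 + τ • (d : X × ℝ)).1 = xb + τ • (d : X × ℝ).1 := rfl
      have h2 : (p0 + τ • (d : X × ℝ)).2 = γ + τ * (d : X × ℝ).2 := rfl
      have := hmem
      rw [epi, Set.mem_setOf_eq] at this
      rw [h2] at this
      exact this
    have hle : f (xb + τ • (d : X × ℝ).1) ≤ (γ : EReal) := by
      refine le_trans hx' ?_
      rw [EReal.coe_le_coe_iff]
      nlinarith
    have := hg _ hle
    rw [add_sub_cancel_left] at this
    rw [map_smul, smul_eq_mul] at this
    have hgd : g (d : X × ℝ).1 ≤ 0 := nonpos_of_mul_nonpos_right ?_ hτpos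
    · exact hgd
    · linarith
  obtain ⟨lam, hlam, hsum⟩ := farkas_lin s Ψ G hfar
  refine ⟨lam none, hlam none, ?_⟩
  intro x t hxt
  have hq : (x, t) ∈ epi f := hxt
  rw [hepi] at hq
  obtain ⟨hqP, hqW⟩ := hq
  obtain ⟨w1, hw1, hw1eq⟩ := hqW
  have hdW : (x, t) - p0 ∈ W := by
    have : (x, t) - p0 = w1 - w0 := by
      simp only [vadd_eq_add] at hw0eq hw1eq
      rw [← hw1eq, ← hw0eq]; abel
    rw [this]; exact W.sub_mem hw1 hw0
  set d : ↥W := ⟨(x, t) - p0, hdW⟩ with hd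
  have hGd : G d = g (x - xb) := rfl
  have hΨnone : Ψ none d = t - γ := rfl
  have hval := hsum d
  rw [hGd] at hval
  have hnone_notmem : none ∉ A.image some := by simp
  rw [hs, Finset.sum_insert hnone_notmem, hΨnone] at hval
  have hqP' : ∀ i, Φ i (x, t) ≤ c i := by rw [hP] at hqP; exact hqP
  have hrest : ∑ o ∈ A.image some, lam o * Ψ o d ≤ 0 := by
    apply Finset.sum_nonpos
    intro o ho
    obtain ⟨i, hi, rfl⟩ := Finset.mem_image.mp ho
    have hiact : Φ i p0 = c i := (Finset.mem_filter.mp hi).2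
    have : Ψ (some i) d = Φ i ((x, t) - p0) := rfl
    rw [this, map_sub, hiact]
    exact mul_nonpos_of_nonneg_of_nonpos (hlam _) (by linarith [hqP' i])
  linarith

theorem normalCone_sublevel
    (f : X → EReal) (hbot : ∀ x, f x ≠ ⊥) (hf : IsGPolyhedral (epi f))
    (xb : X) (γ : ℝ) (hγ : f xb = (γ : EReal)) :
    normalCone {x : X | f x ≤ (γ : EReal)} xb =
      ⋃ l : {l : ℝ // 0 ≤ l},
        (if (l : ℝ) = 0 then singSubdiff f xb else (l : ℝ) • subdiff f xb) := by
  ext g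
  simp only [Set.mem_iUnion]
  constructor
  · intro hg
    have hg' : ∀ x, f x ≤ (γ : EReal) → g (x - xb) ≤ 0 := fun x hx => hg x hx
    obtain ⟨μ, hμ0, hkey⟩ := key_mu f hf xb γ hγ g hg'
    by_cases hμ : μ = 0
    · refine ⟨⟨0, le_refl 0⟩, ?_⟩
      rw [if_pos rfl]
      intro x α hxα
      have := hkey x α hxα
      rw [hμ, zero_mul] at this
      exact this
    · have hμpos : 0 < μ := lt_of_le_of_ne hμ0 (Ne.symm hμ)
      refine ⟨⟨μ, hμ0⟩, ?_⟩
      rw [if_neg hμ]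
      refine Set.mem_smul_set.mpr ⟨μ⁻¹ • g, ?_, ?_⟩
      · intro x
        rw [hγ]
        rcases eq_or_ne (f x) ⊤ with htop | htop
        · rw [htop]; exact le_top
        · lift f x to ℝ using ⟨htop, hbot x⟩ with t ht
          have h1 := hkey x t (le_of_eq ht.symm)
          rw [ContinuousLinearMap.smul_apply, smul_eq_mul]
          rw [← EReal.coe_add, EReal.coe_le_coe_iff]
          have h2 : μ⁻¹ * g (x - xb) ≤ μ⁻¹ * (μ * (t - γ)) :=
            mul_le_mul_of_nonneg_left h1 (le_of_lt (inv_pos.mpr hμpos))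
          rw [← mul_assoc, inv_mul_cancel₀ hμ, one_mul] at h2
          linarith
      · rw [smul_smul, mul_inv_cancel₀ hμ, one_smul]
  · rintro ⟨l, hl⟩
    intro x hx
    have hx' : f x ≤ (γ : EReal) := hx
    split at hl
    · exact hl x γ hx'
    · obtain ⟨h, hh, rfl⟩ := Set.mem_smul_set.mp hl
      have h1 := hh x
      rw [hγ] at h1
      have h2 : f x ≤ (γ : EReal) := hx'
      have h3 : ((h (x - xb) : ℝ) : EReal) + (γ : EReal) ≤ (γ : EReal) := le_trans h1 h2
      rw [← EReal.coe_add, EReal.coe_le_coe_iff] at h3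
      have h4 : h (x - xb) ≤ 0 := by linarith
      rw [ContinuousLinearMap.smul_apply, smul_eq_mul]
      exact mul_nonpos_of_nonneg_of_nonpos l.2 h4
end

section
/- Let f₁,…,f_m : X → (−∞, ∞] (m ≥ 2) be such that at least m−1 are polyhedral convex and the remaining one is generalized polyhedral convex, all continuous at x̄ ∈ L_γ := {x : f_i(x) ≤ γ_i ∀i}. Then N(x̄; L_γ) = {Σ_{i ∈ I(x̄)} λ_i x_i* : λ_i ≥ 0, x_i* ∈ ∂f_i(x̄)}, where I(x̄) = {i : f_i(x̄) = γ_i}. -/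
open Set Pointwise

section Helpers
variable {X : Type*} [AddCommGroup X] [Module ℝ X] [TopologicalSpace X]

/-- Farkas lemma (Bartl-style algebraic induction). -/
theorem farkas_fin : ∀ (n : ℕ) (u : Fin n → X →L[ℝ] ℝ) (g : X →L[ℝ] ℝ),
    (∀ v : X, (∀ i, u i v ≤ 0) → g v ≤ 0) →
    ∃ μ : Fin n → ℝ, (∀ i, 0 ≤ μ i) ∧ g = ∑ i, μ i • u i := by
  intro n
  induction n with
  | zero =>
    intro u g h
    refine ⟨0, fun i => le_rfl, ?_⟩
    have hg : ∀ v, g v = 0 := by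
      intro v
      have h1 := h v (fun i => i.elim0)
      have h2 := h (-v) (fun i => i.elim0)
      simp only [map_neg, neg_nonpos] at h2
      linarith
    ext v; simp [hg v]
  | succ n IH =>
    intro u g h
    set A := u (Fin.last n) with hA
    set rest : Fin n → X →L[ℝ] ℝ := fun i => u i.castSucc with hrest
    by_cases hc : ∀ v : X, (∀ i : Fin n, rest i v ≤ 0) → g v ≤ 0
    · obtain ⟨μ, hμ, hg⟩ := IH rest g hc
      refine ⟨Fin.snoc μ 0, ?_, ?_⟩
      · intro i
        refine Fin.lastCases ?_ ?_ i
        · simp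
        · intro j; simpa using hμ j
      · rw [Fin.sum_univ_castSucc]
        simp [hg]
        rfl
    · push_neg at hc
      obtain ⟨x₀, hx₀, hgx₀⟩ := hc
      have hAx₀ : 0 < A x₀ := by
        by_contra hle
        push_neg at hle
        have : ∀ i : Fin (n+1), u i x₀ ≤ 0 := by
          intro i
          refine Fin.lastCases ?_ ?_ i
          · exact hle
          · exact fun j => hx₀ j
        exact absurd (h x₀ this) (not_le.mpr hgx₀)
      set y := (A x₀)⁻¹ • x₀ with hy
      have hAy : A y = 1 := by
        simp [hy, map_smul, inv_mul_cancel₀ (ne_of_gt hAx₀)]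
      have hresty : ∀ i, rest i y ≤ 0 := by
        intro i
        have : rest i y = (A x₀)⁻¹ * rest i x₀ := by simp [hy]
        rw [this]
        exact mul_nonpos_of_nonneg_of_nonpos (le_of_lt (inv_pos.mpr hAx₀)) (hx₀ i)
      have hgy : 0 < g y := by
        have : g y = (A x₀)⁻¹ * g x₀ := by simp [hy]
        rw [this]
        exact mul_pos (inv_pos.mpr hAx₀) hgx₀
      set u' : Fin n → X →L[ℝ] ℝ := fun i => rest i - (rest i y) • A with hu'
      set g' : X →L[ℝ] ℝ := g - (g y) • A with hg'
      have hImp : ∀ v : X, (∀ i, u' i v ≤ 0) → g' v ≤ 0 := by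
        intro v hv
        set z := v - (A v) • y with hz
        have hAz : A z = 0 := by simp [hz, map_sub, map_smul, hAy]
        have hrz : ∀ i : Fin n, rest i z = u' i v := by
          intro i
          simp [hz, hu', map_sub, map_smul, smul_eq_mul]
          ring
        have huz : ∀ i : Fin (n+1), u i z ≤ 0 := by
          intro i
          refine Fin.lastCases ?_ ?_ i
          · exact le_of_eq hAz
          · intro j; rw [show u j.castSucc z = rest j z from rfl, hrz j]; exact hv j
        have hgz := h z huz
        have : g z = g' v := by
          simp only [hz, hg', map_sub, map_smul, smul_eq_mul,
            ContinuousLinearMap.sub_apply, ContinuousLinearMap.coe_smul', Pi.smul_apply]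
          ring
        linarith [this ▸ hgz]
      obtain ⟨lam, hlam, hglam⟩ := IH u' g' hImp
      set clast := g y - ∑ i, lam i * rest i y with hclast
      refine ⟨Fin.snoc lam clast, ?_, ?_⟩
      · intro i
        refine Fin.lastCases ?_ ?_ i
        · rw [Fin.snoc_last]
          have hsum : ∑ i, lam i * rest i y ≤ 0 :=
            Finset.sum_nonpos fun i _ => mul_nonpos_of_nonneg_of_nonpos (hlam i) (hresty i)
          rw [hclast]; linarith
        · intro j; simpa using hlam j
      · ext v
        have hgv : g' v = ∑ i, lam i * u' i v := by
          rw [hglam]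
          simp [ContinuousLinearMap.sum_apply]
        have expand : g v - g y * A v
            = ∑ i, lam i * (rest i v - rest i y * A v) := by
          have : g' v = g v - g y * A v := by simp [hg']
          rw [← this, hgv]
          refine Finset.sum_congr rfl fun i _ => ?_
          simp [hu']
        rw [Fin.sum_univ_castSucc]
        simp only [ContinuousLinearMap.add_apply, ContinuousLinearMap.sum_apply,
          ContinuousLinearMap.coe_smul', Pi.smul_apply, smul_eq_mul, Fin.snoc_castSucc,
          Fin.snoc_last]
        have : ∑ i, lam i * (rest i v - rest i y * A v)
            = (∑ i, lam i * rest i v) - (∑ i, lam i * rest i y) * A v := by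
          rw [Finset.sum_mul, ← Finset.sum_sub_distrib]
          refine Finset.sum_congr rfl fun i _ => by ring
        rw [this] at expand
        have : ∀ j : Fin n, u j.castSucc v = rest j v := fun j => rfl
        simp only [this, hclast]
        linarith [expand]

theorem farkas_pred {ι : Type*} [Fintype ι] (u : ι → X →L[ℝ] ℝ) (P : ι → Prop)
    (g : X →L[ℝ] ℝ) (h : ∀ v : X, (∀ s, P s → u s v ≤ 0) → g v ≤ 0) :
    ∃ μ : ι → ℝ, (∀ s, 0 ≤ μ s) ∧ (∀ s, ¬ P s → μ s = 0) ∧ g = ∑ s, μ s • u s := by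
  classical
  set κ := {s : ι // P s}
  set e := (Fintype.equivFin κ).symm
  obtain ⟨μ0, hμ0, hg0⟩ := farkas_fin (Fintype.card κ) (fun k => u (e k).1) g
    (fun v hv => h v (fun s hs => by simpa using hv (e.symm ⟨s, hs⟩)))
  refine ⟨fun s => if hs : P s then μ0 (e.symm ⟨s, hs⟩) else 0, ?_, ?_, ?_⟩
  · intro s; by_cases hs : P s <;> simp [hs, hμ0]
  · intro s hs; simp [hs]
  · rw [hg0]
    have h1 : ∑ i : Fin (Fintype.card κ), μ0 i • u (e i).1
        = ∑ k : κ, μ0 (e.symm k) • u k.1 := by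
      rw [← Equiv.sum_comp e (fun k : κ => μ0 (e.symm k) • u k.1)]
      refine Finset.sum_congr rfl fun i _ => by simp
    have h2 : ∑ k : κ, μ0 (e.symm k) • u k.1
        = ∑ s ∈ Finset.univ.filter P,
            (if hs : P s then μ0 (e.symm ⟨s, hs⟩) else 0) • u s := by
      rw [Finset.sum_subtype (p := P) (Finset.univ.filter P) (fun x => by simp)
        (fun s => (if hs : P s then μ0 (e.symm ⟨s, hs⟩) else 0) • u s)]
      refine Finset.sum_congr rfl fun k _ => by simp [k.2]
    have h3 : ∑ s ∈ Finset.univ.filter P,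
            (if hs : P s then μ0 (e.symm ⟨s, hs⟩) else 0) • u s
        = ∑ s : ι, (if hs : P s then μ0 (e.symm ⟨s, hs⟩) else 0) • u s := by
      refine Finset.sum_filter_of_ne fun s _ hne => ?_
      by_contra hP
      exact hne (by simp [hP])
    rw [h1, h2, h3]

theorem epi_rep {f : X → EReal} (h : IsPolyhedral (epi f)) :
    ∃ (n : ℕ) (u : Fin n → X →L[ℝ] ℝ) (b : Fin n → ℝ) (α : Fin n → ℝ),
      ∀ (x : X) (t : ℝ), (f x ≤ (t : EReal) ↔ ∀ k, u k x + b k * t ≤ α k) := by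
  obtain ⟨n, F, α, hF⟩ := h
  refine ⟨n, fun k => (F k).comp (ContinuousLinearMap.inl ℝ X ℝ),
    fun k => F k (0, 1), α, fun x t => ?_⟩
  have hmem : f x ≤ (t : EReal) ↔ (x, t) ∈ epi f := Iff.rfl
  rw [hmem, hF]
  simp only [mem_setOf_eq]
  refine forall_congr' fun k => ?_
  have : (x, t) = (x, (0:ℝ)) + t • ((0:X), (1:ℝ)) := by
    simp [Prod.ext_iff]
  rw [this, map_add, map_smul]
  simp [ContinuousLinearMap.inl_apply, smul_eq_mul, mul_comm]

theorem rep_b_nonpos {f : X → EReal} {n : ℕ} {u : Fin n → X →L[ℝ] ℝ}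
    {b α : Fin n → ℝ}
    (hrep : ∀ (x : X) (t : ℝ), (f x ≤ (t : EReal) ↔ ∀ k, u k x + b k * t ≤ α k))
    {xb : X} {r : ℝ} (hfxb : f xb ≤ (r : EReal)) (k : Fin n) : b k ≤ 0 := by
  by_contra hb
  push_neg at hb
  set T := max r ((α k - u k xb + 1) / b k) with hT
  have h1 : f xb ≤ (T : EReal) :=
    le_trans hfxb (by exact_mod_cast le_max_left _ _)
  have h2 := (hrep xb T).mp h1 k
  have h3 : (α k - u k xb + 1) / b k ≤ T := le_max_right _ _
  have h4 : α k - u k xb + 1 ≤ b k * T := by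
    rw [div_le_iff₀ hb] at h3; linarith
  linarith

theorem gp_epi_poly [IsTopologicalAddGroup X] [ContinuousSMul ℝ X]
    {f : X → EReal} (hgp : IsGPolyhedral (epi f)) {xb : X} {r : ℝ}
    (hfxb : f xb = (r : EReal)) (hcont : ContinuousAt f xb)
    (hbot : ∀ x, f x ≠ ⊥) : IsPolyhedral (epi f) := by
  obtain ⟨P, a, L, hP, _, heq⟩ := hgp
  have hmemL : ∀ p : X × ℝ, p ∈ a +ᵥ (L : Set (X × ℝ)) ↔ p - a ∈ L := by
    intro p
    rw [Set.mem_vadd_set_iff_neg_vadd_mem]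
    simp [vadd_eq_add, sub_eq_neg_add]
  have hepiL : ∀ p ∈ epi f, p - a ∈ L := by
    intro p hp
    rw [heq] at hp
    exact (hmemL p).mp hp.2
  have hxbr : ((xb, r) : X × ℝ) ∈ epi f := by
    simp only [epi, mem_setOf_eq, hfxb, le_refl]
  have hxbr1 : ((xb, r + 1) : X × ℝ) ∈ epi f := by
    simp only [epi, mem_setOf_eq, hfxb]
    exact_mod_cast (by linarith : r ≤ r + 1)
  have h01 : (((0:X), (1:ℝ)) : X × ℝ) ∈ L := by
    have := L.sub_mem (hepiL _ hxbr1) (hepiL _ hxbr)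
    have heq2 : ((xb, r+1) - a) - ((xb, r) - a) = (((0:X), (1:ℝ)) : X × ℝ) := by
      rw [sub_sub_sub_cancel_right]
      simp [Prod.ext_iff]
    rwa [heq2] at this
  have hU : f ⁻¹' (Iio ⊤) ∈ nhds xb := by
    apply hcont.preimage_mem_nhds
    rw [hfxb]
    exact Iio_mem_nhds (EReal.coe_lt_top r)
  set M : Submodule ℝ X := L.comap (LinearMap.inl ℝ X ℝ) with hM
  have hMiff : ∀ v : X, v ∈ M ↔ ((v, (0:ℝ)) : X × ℝ) ∈ L := fun v => Iff.rfl
  have hUM : ∀ x ∈ f ⁻¹' (Iio ⊤), x - xb ∈ M := by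
    intro x hx
    have hxt : f x ≠ ⊤ := ne_of_lt hx
    have hxreal : f x = ((f x).toReal : EReal) := (EReal.coe_toReal hxt (hbot x)).symm
    have hmem : ((x, (f x).toReal) : X × ℝ) ∈ epi f := by
      exact hxreal.le
    have h1 : ((x, (f x).toReal) : X × ℝ) - a ∈ L := hepiL _ hmem
    have h2 : ((x, (f x).toReal) : X × ℝ) - (xb, r) ∈ L := by
      have := L.sub_mem h1 (hepiL _ hxbr)
      rwa [sub_sub_sub_cancel_right] at this
    have h3 : ((x - xb, (0:ℝ)) : X × ℝ) ∈ L := by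
      have := L.sub_mem h2 (L.smul_mem ((f x).toReal - r) h01)
      have heq3 : ((x, (f x).toReal) : X × ℝ) - (xb, r)
          - ((f x).toReal - r) • (((0:X), (1:ℝ)) : X × ℝ) = (x - xb, (0:ℝ)) := by
        simp [Prod.ext_iff, Prod.smul_def]
      rwa [heq3] at this
    exact (hMiff _).mpr h3
  have hMtop : M = ⊤ := by
    rw [Submodule.eq_top_iff']
    intro v
    have hmap : ContinuousAt (fun c : ℝ => xb + c • v) 0 :=
      (continuous_const.add (continuous_id.smul continuous_const)).continuousAt
    have hpre : (fun c : ℝ => xb + c • v) ⁻¹' (f ⁻¹' (Iio ⊤)) ∈ nhds (0:ℝ) := by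
      apply hmap.preimage_mem_nhds
      simpa using hU
    obtain ⟨ε, hε, hball⟩ := Metric.mem_nhds_iff.mp hpre
    have hc : xb + (ε/2) • v ∈ f ⁻¹' (Iio ⊤) := by
      apply hball
      simp only [Metric.mem_ball, Real.dist_eq, sub_zero]
      rw [abs_of_pos (by linarith : (0:ℝ) < ε/2)]
      linarith
    have := hUM _ hc
    simp only [add_sub_cancel_left] at this
    have h2 := M.smul_mem (ε/2)⁻¹ this
    rwa [smul_smul, inv_mul_cancel₀ (by positivity), one_smul] at h2
  have hvadd : a +ᵥ (L : Set (X × ℝ)) = univ := by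
    rw [eq_univ_iff_forall]
    intro p
    rw [hmemL]
    have h1 : ((p.1 - xb, (0:ℝ)) : X × ℝ) ∈ L := by
      have : p.1 - xb ∈ M := by rw [hMtop]; trivial
      exact (hMiff _).mp this
    have h2 : p - (xb, r) ∈ L := by
      have := L.add_mem h1 (L.smul_mem (p.2 - r) h01)
      have heq4 : ((p.1 - xb, (0:ℝ)) : X × ℝ) + (p.2 - r) • (((0:X), (1:ℝ)) : X × ℝ)
          = p - (xb, r) := by
        simp [Prod.ext_iff, Prod.smul_def]
      rwa [heq4] at this
    have := L.add_mem h2 (hepiL _ hxbr)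
    rwa [sub_add_sub_cancel] at this
  rw [heq, hvadd, inter_univ]
  exact hP

theorem subgrad_of_active {f : X → EReal} (hbot : ∀ x, f x ≠ ⊥)
    {n : ℕ} {u : Fin n → X →L[ℝ] ℝ} {b α : Fin n → ℝ}
    (hrep : ∀ (x : X) (t : ℝ), (f x ≤ (t : EReal) ↔ ∀ k, u k x + b k * t ≤ α k))
    {xb : X} {r : ℝ} (hfxb : f xb = (r : EReal)) {k : Fin n}
    (hbk : b k < 0) (hact : u k xb + b k * r = α k) :
    (-(b k))⁻¹ • u k ∈ subdiff f xb := by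
  intro x
  rcases eq_or_ne (f x) ⊤ with htop | htop
  · rw [htop]; exact le_top
  · have hxreal : f x = ((f x).toReal : EReal) := (EReal.coe_toReal htop (hbot x)).symm
    set s := (f x).toReal with hs
    have h1 := (hrep x s).mp hxreal.le k
    have h2 : u k (x - xb) ≤ (-(b k)) * (s - r) := by
      have := (u k).map_sub x xb
      rw [this]
      nlinarith
    have h3 : ((-(b k))⁻¹ • u k) (x - xb) ≤ s - r := by
      have hpos : 0 < -(b k) := by linarith
      simp only [ContinuousLinearMap.coe_smul', Pi.smul_apply, smul_eq_mul]
      rw [inv_mul_le_iff₀ hpos]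
      linarith [h2]
    rw [hfxb, hxreal]
    have hfin : (((-(b k))⁻¹ • u k) (x - xb)) + r ≤ s := by linarith
    exact_mod_cast hfin

theorem subdiff_nonempty_of_rep {f : X → EReal} (hbot : ∀ x, f x ≠ ⊥)
    {n : ℕ} {u : Fin n → X →L[ℝ] ℝ} {b α : Fin n → ℝ}
    (hrep : ∀ (x : X) (t : ℝ), (f x ≤ (t : EReal) ↔ ∀ k, u k x + b k * t ≤ α k))
    {xb : X} {r : ℝ} (hfxb : f xb = (r : EReal)) (hb : ∀ k, b k ≤ 0) :
    (subdiff f xb).Nonempty := by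
  classical
  have hr : ∀ k, u k xb + b k * r ≤ α k := (hrep xb r).mp hfxb.le
  have hex : ∃ k, b k < 0 ∧ u k xb + b k * r = α k := by
    by_contra hno
    push_neg at hno
    have hstrict : ∀ k, b k < 0 → u k xb + b k * r < α k := by
      intro k hk
      exact lt_of_le_of_ne (hr k) (hno k hk)
    set S := Finset.univ.filter (fun k : Fin n => b k < 0) with hS
    have hδ : ∃ δ : ℝ, 0 < δ ∧ ∀ k, u k xb + b k * (r - δ) ≤ α k := by
      rcases S.eq_empty_or_nonempty with hSe | hSne
      · refine ⟨1, one_pos, fun k => ?_⟩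
        have hbk : b k = 0 := by
          by_contra hne
          have : k ∈ S := by
            rw [hS]; simp only [Finset.mem_filter, Finset.mem_univ, true_and]
            exact lt_of_le_of_ne (hb k) hne
          rw [hSe] at this; exact absurd this (Finset.notMem_empty k)
        have := hr k
        rw [hbk] at this ⊢
        linarith
      · set δ := S.inf' hSne (fun k => (α k - u k xb - b k * r) / (-(b k))) with hδdef
        have hδpos : 0 < δ := by
          rw [hδdef, Finset.lt_inf'_iff]
          intro k hk
          have hk' : b k < 0 := by
            rw [hS] at hk; simpa using hk
          exact div_pos (by linarith [hstrict k hk']) (by linarith)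
        refine ⟨δ, hδpos, fun k => ?_⟩
        rcases lt_or_eq_of_le (hb k) with hbk | hbk
        · have hkS : k ∈ S := by
            rw [hS]; simp only [Finset.mem_filter, Finset.mem_univ, true_and]; exact hbk
          have hle : δ ≤ (α k - u k xb - b k * r) / (-(b k)) :=
            Finset.inf'_le _ hkS
          have : δ * (-(b k)) ≤ α k - u k xb - b k * r := by
            rw [← le_div_iff₀ (by linarith : (0:ℝ) < -(b k))]
            exact hle
          nlinarith
        · have := hr k
          rw [hbk] at this ⊢
          linarith
    obtain ⟨δ, hδpos, hineq⟩ := hδ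
    have : f xb ≤ ((r - δ : ℝ) : EReal) := (hrep xb (r - δ)).mpr hineq
    rw [hfxb] at this
    have : r ≤ r - δ := by exact_mod_cast this
    linarith
  obtain ⟨k, hbk, hact⟩ := hex
  exact ⟨_, subgrad_of_active hbot hrep hfxb hbk hact⟩

theorem active_b0_u_zero [IsTopologicalAddGroup X] [ContinuousSMul ℝ X]
    {f : X → EReal} (hbot : ∀ x, f x ≠ ⊥)
    {n : ℕ} {u : Fin n → X →L[ℝ] ℝ} {b α : Fin n → ℝ}
    (hrep : ∀ (x : X) (t : ℝ), (f x ≤ (t : EReal) ↔ ∀ k, u k x + b k * t ≤ α k))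
    {xb : X} (hcont : ContinuousAt f xb) (hftop : f xb ≠ ⊤)
    {k : Fin n} (hbk : b k = 0) (hact : u k xb = α k) : u k = 0 := by
  have hU : f ⁻¹' (Iio ⊤) ∈ nhds xb := by
    apply hcont.preimage_mem_nhds
    exact Iio_mem_nhds (lt_top_iff_ne_top.mpr hftop)
  have hmax : ∀ x ∈ f ⁻¹' (Iio ⊤), u k x ≤ u k xb := by
    intro x hx
    have hxt : f x ≠ ⊤ := ne_of_lt hx
    have hxreal : f x = ((f x).toReal : EReal) := (EReal.coe_toReal hxt (hbot x)).symm
    have h1 := (hrep x (f x).toReal).mp hxreal.le k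
    rw [hbk] at h1
    rw [hact]
    linarith
  ext v
  simp only [ContinuousLinearMap.zero_apply]
  have hmap : ContinuousAt (fun c : ℝ => xb + c • v) 0 :=
    (continuous_const.add (continuous_id.smul continuous_const)).continuousAt
  have hpre : (fun c : ℝ => xb + c • v) ⁻¹' (f ⁻¹' (Iio ⊤)) ∈ nhds (0:ℝ) := by
    apply hmap.preimage_mem_nhds
    simpa using hU
  obtain ⟨ε, hε, hball⟩ := Metric.mem_nhds_iff.mp hpre
  have hmem : ∀ c : ℝ, |c| < ε → u k (xb + c • v) ≤ u k xb := by
    intro c hc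
    apply hmax
    apply hball
    simpa [Metric.mem_ball, Real.dist_eq] using hc
  have habs : |ε/2| < ε := by
    rw [abs_of_pos (by linarith)]; linarith
  have h1 := hmem (ε/2) habs
  have h2 := hmem (-(ε/2)) (by rwa [abs_neg])
  simp only [map_add, map_smul, smul_eq_mul] at h1 h2
  nlinarith

end Helpers

variable {X : Type*} [AddCommGroup X] [Module ℝ X] [TopologicalSpace X]
  [IsTopologicalAddGroup X] [ContinuousSMul ℝ X] [LocallyConvexSpace ℝ X] [T2Space X]
variable {Y : Type*} [AddCommGroup Y] [Module ℝ Y] [TopologicalSpace Y]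
  [IsTopologicalAddGroup Y] [ContinuousSMul ℝ Y] [LocallyConvexSpace ℝ Y] [T2Space Y]
variable {Z : Type*} [AddCommGroup Z] [Module ℝ Z] [TopologicalSpace Z]
  [IsTopologicalAddGroup Z] [ContinuousSMul ℝ Z] [LocallyConvexSpace ℝ Z] [T2Space Z]

theorem normalCone_sublevel_system
    (m : ℕ) (hm : 2 ≤ m) (f : Fin m → X → EReal)
    (hbot : ∀ i x, f i x ≠ ⊥)
    (hpoly : ∃ j, IsGPolyhedral (epi (f j)) ∧
      ∀ i, i ≠ j → IsPolyhedral (epi (f i)))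
    (γ : Fin m → ℝ) (xb : X)
    (hxb : ∀ i, f i xb ≤ (γ i : EReal))
    (hcont : ∀ i, ContinuousAt (f i) xb) :
    normalCone {x : X | ∀ i, f i x ≤ (γ i : EReal)} xb =
      {g : X →L[ℝ] ℝ | ∃ (c : Fin m → ℝ) (xs : Fin m → X →L[ℝ] ℝ),
        (∀ i, 0 ≤ c i) ∧ (∀ i, f i xb ≠ (γ i : EReal) → c i = 0) ∧
        (∀ i, xs i ∈ subdiff (f i) xb) ∧ g = ∑ i, c i • xs i} := by
  classical
  have hftop : ∀ i, f i xb ≠ ⊤ := by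
    intro i h
    have := hxb i
    rw [h] at this
    exact absurd this (by simp)
  have hfin : ∀ i, ∃ r : ℝ, f i xb = (r : EReal) :=
    fun i => ⟨(f i xb).toReal, ((EReal.coe_toReal (hftop i) (hbot i xb)).symm)⟩
  choose rr hrr using hfin
  have hallpoly : ∀ i, IsPolyhedral (epi (f i)) := by
    obtain ⟨j, hj, hothers⟩ := hpoly
    intro i
    by_cases hij : i = j
    · subst hij
      exact gp_epi_poly hj (hrr i) (hcont i) (hbot i)
    · exact hothers i hij
  choose n u b α hrep using fun i => epi_rep (hallpoly i)
  have hbnp : ∀ i k, b i k ≤ 0 := fun i k => rep_b_nonpos (hrep i) (hxb i) k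
  set P : ((i : Fin m) × Fin (n i)) → Prop :=
    fun s => u s.1 s.2 xb + b s.1 s.2 * γ s.1 = α s.1 s.2 with hP
  have hslack : ∀ s : (i : Fin m) × Fin (n i),
      u s.1 s.2 xb + b s.1 s.2 * γ s.1 ≤ α s.1 s.2 :=
    fun s => (hrep s.1 xb (γ s.1)).mp (hxb s.1) s.2
  -- active with negative b forces activity of the function
  have key2 : ∀ (i : Fin m) (k : Fin (n i)), P ⟨i, k⟩ → b i k < 0 →
      f i xb = (γ i : EReal) := by
    intro i k hact hbk
    have hr := hrr i
    have hle : rr i ≤ γ i := by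
      have := hxb i; rw [hr] at this; exact_mod_cast this
    have h1 := (hrep i xb (rr i)).mp hr.le k
    rw [hP] at hact
    simp only at hact
    have hge : γ i ≤ rr i := by nlinarith
    have : rr i = γ i := le_antisymm hle hge
    rw [hr, this]
  have key3 : ∀ (i : Fin m) (k : Fin (n i)), P ⟨i, k⟩ → b i k = 0 →
      u i k = 0 := by
    intro i k hact hbk
    apply active_b0_u_zero (hbot i) (hrep i) (hcont i) (hftop i) hbk
    rw [hP] at hact; simp only at hact
    rw [hbk] at hact; linarith
  ext g
  simp only [mem_setOf_eq]
  constructor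
  · intro hg
    have hfark : ∀ v : X, (∀ s : (i : Fin m) × Fin (n i), P s → u s.1 s.2 v ≤ 0) →
        g v ≤ 0 := by
      intro v hv
      set tval : ((i : Fin m) × Fin (n i)) → ℝ := fun s =>
        if u s.1 s.2 v ≤ 0 then 1
        else (α s.1 s.2 - u s.1 s.2 xb - b s.1 s.2 * γ s.1) / (u s.1 s.2 v) with htval
      set F : Finset ℝ := insert 1 (Finset.univ.image tval) with hF
      have h1F : (1:ℝ) ∈ F := Finset.mem_insert_self 1 _
      set t : ℝ := F.min' ⟨1, h1F⟩ with ht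
      have htpos : 0 < t := by
        rw [ht]; refine (Finset.lt_min'_iff F _).mpr ?_
        intro y hy
        rw [hF, Finset.mem_insert] at hy
        rcases hy with hy | hy
        · rw [hy]; exact one_pos
        · obtain ⟨s, _, hs⟩ := Finset.mem_image.mp hy
          rw [← hs, htval]
          by_cases huv : u s.1 s.2 v ≤ 0
          · simp [huv]
          · push_neg at huv
            simp only [not_le.mpr huv, if_false]
            have hslacks : u s.1 s.2 xb + b s.1 s.2 * γ s.1 < α s.1 s.2 := by
              rcases lt_or_eq_of_le (hslack s) with h | h
              · exact h
              · exact absurd (hv s h) (not_le.mpr huv)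
            exact div_pos (by linarith) huv
      have htle : ∀ s : (i : Fin m) × Fin (n i), t ≤ tval s := by
        intro s
        apply Finset.min'_le
        rw [hF]
        exact Finset.mem_insert_of_mem (Finset.mem_image_of_mem _ (Finset.mem_univ s))
      have hmemL : ∀ i, f i (xb + t • v) ≤ (γ i : EReal) := by
        intro i
        rw [hrep i (xb + t • v) (γ i)]
        intro k
        have hexp : u i k (xb + t • v) = u i k xb + t * u i k v := by
          rw [map_add, map_smul]; rfl
        rw [hexp]
        set s : (i : Fin m) × Fin (n i) := ⟨i, k⟩ with hs
        by_cases huv : u i k v ≤ 0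
        · have : t * u i k v ≤ 0 := mul_nonpos_of_nonneg_of_nonpos htpos.le huv
          have := hslack s
          simp only [hs] at this
          linarith
        · push_neg at huv
          have h2 := htle s
          rw [htval] at h2
          simp only [hs, not_le.mpr huv, if_false] at h2
          have h3 : t * u i k v ≤ α i k - u i k xb - b i k * γ i := by
            rw [← le_div_iff₀ huv]
            rwa [if_neg (show ¬ (u s.1 s.2 v ≤ 0) from not_le.mpr huv)] at h2
          linarith
      have := hg (xb + t • v) hmemL
      rw [add_sub_cancel_left, map_smul] at this
      have : t * g v ≤ 0 := this
      nlinarith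
    obtain ⟨μ, hμ0, hμP, hgsum⟩ :=
      farkas_pred (fun s : (i : Fin m) × Fin (n i) => u s.1 s.2) P g hfark
    set c : Fin m → ℝ := fun i => ∑ k, μ ⟨i, k⟩ * (-(b i k)) with hc
    have hc0 : ∀ i, 0 ≤ c i := by
      intro i
      apply Finset.sum_nonneg
      intro k _
      exact mul_nonneg (hμ0 _) (by linarith [hbnp i k])
    have hμact : ∀ s, μ s ≠ 0 → P s := by
      intro s hs
      by_contra hns
      exact hs (hμP s hns)
    have hcz : ∀ i, f i xb ≠ (γ i : EReal) → c i = 0 := by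
      intro i hne
      rw [hc]
      apply Finset.sum_eq_zero
      intro k _
      by_cases hμ : μ ⟨i, k⟩ = 0
      · rw [hμ]; ring
      · have hact := hμact _ hμ
        have hbk : b i k = 0 := by
          rcases lt_or_eq_of_le (hbnp i k) with h | h
          · exact absurd (key2 i k hact h) hne
          · exact h
        rw [hbk]; ring
    set w : (i : Fin m) → X →L[ℝ] ℝ := fun i => ∑ k, μ ⟨i, k⟩ • u i k with hw
    have hwzero : ∀ i, c i = 0 → w i = 0 := by
      intro i hci
      rw [hw]
      apply Finset.sum_eq_zero
      intro k _
      by_cases hμ : μ ⟨i, k⟩ = 0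
      · rw [hμ, zero_smul]
      · have hact := hμact _ hμ
        have hterm : μ ⟨i, k⟩ * (-(b i k)) = 0 := by
          have hall := (Finset.sum_eq_zero_iff_of_nonneg
            (fun k _ => mul_nonneg (hμ0 (⟨i, k⟩ : (i : Fin m) × Fin (n i)))
              (by linarith [hbnp i k]))).mp (hc ▸ hci)
          exact hall k (Finset.mem_univ k)
        have hbk : b i k = 0 := by
          rcases mul_eq_zero.mp hterm with h | h
          · exact absurd h hμ
          · linarith
        rw [key3 i k hact hbk, smul_zero]
    have hwsub : ∀ i, c i ≠ 0 → (c i)⁻¹ • w i ∈ subdiff (f i) xb := by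
      intro i hci
      have hcipos : 0 < c i := lt_of_le_of_ne (hc0 i) (Ne.symm hci)
      have hfγ : f i xb = (γ i : EReal) := by
        by_contra hne
        exact hci (hcz i hne)
      intro x
      rcases eq_or_ne (f i x) ⊤ with htop | htop
      · rw [htop]; exact le_top
      · have hxreal : f i x = ((f i x).toReal : EReal) :=
          (EReal.coe_toReal htop (hbot i x)).symm
        set sx := (f i x).toReal with hsx
        have hwle : w i (x - xb) ≤ c i * (sx - γ i) := by
          rw [hw]
          have hsum : (∑ k, μ ⟨i, k⟩ • u i k) (x - xb)
              = ∑ k, μ ⟨i, k⟩ * (u i k (x - xb)) := by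
            rw [ContinuousLinearMap.sum_apply]
            exact Finset.sum_congr rfl fun k _ => rfl
          rw [hsum, hc, Finset.sum_mul]
          apply Finset.sum_le_sum
          intro k _
          by_cases hμ : μ ⟨i, k⟩ = 0
          · rw [hμ]; simp
          · have hact := hμact _ hμ
            rw [hP] at hact; simp only at hact
            have h1 := (hrep i x sx).mp hxreal.le k
            have h2 : u i k (x - xb) ≤ (-(b i k)) * (sx - γ i) := by
              rw [(u i k).map_sub]
              nlinarith
            calc μ ⟨i, k⟩ * (u i k (x - xb))
                ≤ μ ⟨i, k⟩ * ((-(b i k)) * (sx - γ i)) :=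
                  mul_le_mul_of_nonneg_left h2 (hμ0 _)
              _ = μ ⟨i, k⟩ * -(b i k) * (sx - γ i) := by ring
        have hfinal : ((c i)⁻¹ • w i) (x - xb) + γ i ≤ sx := by
          have : ((c i)⁻¹ • w i) (x - xb) = (c i)⁻¹ * w i (x - xb) := rfl
          rw [this, ← le_sub_iff_add_le, inv_mul_le_iff₀ hcipos]
          linarith
        rw [hfγ, hxreal]
        exact_mod_cast hfinal
    set xs : (i : Fin m) → X →L[ℝ] ℝ := fun i =>
      if hci : c i = 0 then
        (subdiff_nonempty_of_rep (hbot i) (hrep i) (hrr i) (hbnp i)).choose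
      else (c i)⁻¹ • w i with hxs
    refine ⟨c, xs, hc0, hcz, ?_, ?_⟩
    · intro i
      rw [hxs]
      by_cases hci : c i = 0
      · simp only [hci, dif_pos]
        exact (subdiff_nonempty_of_rep (hbot i) (hrep i) (hrr i) (hbnp i)).choose_spec
      · simp only [hci, dif_neg, not_false_iff]
        exact hwsub i hci
    · rw [hgsum, ← Finset.univ_sigma_univ, Finset.sum_sigma]
      apply Finset.sum_congr rfl
      intro i _
      by_cases hci : c i = 0
      · rw [hci, zero_smul]
        have := hwzero i hci
        rw [hw] at this
        exact this
      · rw [hxs]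
        simp only [hci, dif_neg, not_false_iff]
        rw [smul_smul, mul_inv_cancel₀ hci, one_smul, hw]
  · rintro ⟨c, xs, hc0, hcz, hxs, hgeq⟩
    intro x hx
    rw [hgeq]
    have : (∑ i, c i • xs i) (x - xb) = ∑ i, c i * (xs i (x - xb)) := by
      rw [ContinuousLinearMap.sum_apply]
      exact Finset.sum_congr rfl fun i _ => rfl
    rw [this]
    apply Finset.sum_nonpos
    intro i _
    by_cases hci : c i = 0
    · rw [hci]; simp
    · have hfγ : f i xb = (γ i : EReal) := by
        by_contra hne
        exact hci (hcz i hne)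
      have h1 := hxs i x
      rw [hfγ] at h1
      have h2 : ((xs i (x - xb) : ℝ) : EReal) + (γ i : EReal) ≤ (γ i : EReal) :=
        le_trans h1 (hx i)
      have h3 : ((xs i (x - xb) + γ i : ℝ) : EReal) ≤ ((γ i : ℝ) : EReal) := by
        rw [EReal.coe_add]; exact h2
      have h4 : xs i (x - xb) + γ i ≤ γ i := by exact_mod_cast h3
      have h5 : xs i (x - xb) ≤ 0 := by linarith
      exact mul_nonpos_of_nonneg_of_nonpos (hc0 i) h5
end

section
/- Let μ(x) = inf{φ(x,y) : y ∈ F(x)} with μ > −∞ everywhere, where one of φ : X × Y → (−∞, ∞] and F : X ⇉ Y is polyhedral convex and the other generalized polyhedral convex. If x̄ ∈ dom(μ) and ȳ ∈ F(x̄) satisfies μ(x̄) = φ(x̄, ȳ), then ∂μ(x̄) = ∪_{(u,v) ∈ ∂φ(x̄,ȳ)} [u + D*F(x̄, ȳ)(v)]. -/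
open Set Pointwise

variable {X : Type*} [AddCommGroup X] [Module ℝ X] [TopologicalSpace X]
  [IsTopologicalAddGroup X] [ContinuousSMul ℝ X] [LocallyConvexSpace ℝ X] [T2Space X]
variable {Y : Type*} [AddCommGroup Y] [Module ℝ Y] [TopologicalSpace Y]
  [IsTopologicalAddGroup Y] [ContinuousSMul ℝ Y] [LocallyConvexSpace ℝ Y] [T2Space Y]
variable {Z : Type*} [AddCommGroup Z] [Module ℝ Z] [TopologicalSpace Z]
  [IsTopologicalAddGroup Z] [ContinuousSMul ℝ Z] [LocallyConvexSpace ℝ Z] [T2Space Z]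



section Cone
variable {E : Type*} [AddCommGroup E] [Module ℝ E]

lemma cone_caratheodory {κ : Type*} [DecidableEq κ] (v : κ → E) (s : Finset κ) :
    ∀ lam : κ → ℝ, (∀ i ∈ s, 0 ≤ lam i) →
    ∃ t : Finset κ, t ⊆ s ∧ LinearIndependent ℝ (fun i : t => v i) ∧
      ∃ mu : κ → ℝ, (∀ i ∈ t, 0 ≤ mu i) ∧
        ∑ i ∈ t, mu i • v i = ∑ i ∈ s, lam i • v i := by
  induction s using Finset.strongInduction with
  | _ s ih =>
    intro lam hlam
    by_cases hind : LinearIndependent ℝ (fun i : s => v i)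
    · exact ⟨s, le_refl _, hind, lam, hlam, rfl⟩
    · obtain ⟨c, hc, hex⟩ : ∃ c : s → ℝ, (∑ i : s, c i • v i = 0) ∧ ∃ i, 0 < c i := by
        obtain ⟨c, hc, i, hi⟩ := Fintype.not_linearIndependent_iff.mp hind
        rcases hi.lt_or_gt with h | h
        · refine ⟨-c, ?_, i, by simpa using h⟩
          simp only [Pi.neg_apply, neg_smul]
          rw [Finset.sum_neg_distrib, neg_eq_zero]
          exact hc
        · exact ⟨c, hc, i, h⟩
      classical
      set cE : κ → ℝ := fun i => if h : i ∈ s then c ⟨i, h⟩ else 0 with hcE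
      have hcE_sum : ∑ i ∈ s, cE i • v i = 0 := by
        rw [← Finset.sum_coe_sort s (fun i => cE i • v i)]
        rw [← hc]
        exact Finset.sum_congr rfl (fun i _ => by simp [hcE, i.2])
      set T : Finset κ := s.filter (fun i => 0 < cE i) with hT
      have hTne : T.Nonempty := by
        obtain ⟨i, hi⟩ := hex
        exact ⟨i, Finset.mem_filter.mpr ⟨i.2, by simpa [hcE, i.2] using hi⟩⟩
      obtain ⟨i₀, hi₀T, hi₀min⟩ := T.exists_min_image (fun i => lam i / cE i) hTne
      have hi₀s : i₀ ∈ s := (Finset.mem_filter.mp hi₀T).1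
      have hci₀ : 0 < cE i₀ := (Finset.mem_filter.mp hi₀T).2
      set r : ℝ := lam i₀ / cE i₀ with hr
      have hr0 : 0 ≤ r := div_nonneg (hlam i₀ hi₀s) hci₀.le
      set mu : κ → ℝ := fun i => lam i - r * cE i with hmu
      have hmupos : ∀ i ∈ s, 0 ≤ mu i := by
        intro i hi
        rcases le_or_gt (cE i) 0 with h | h
        · have : r * cE i ≤ 0 := mul_nonpos_of_nonneg_of_nonpos hr0 h
          simp only [hmu]; linarith [hlam i hi]
        · have hiT : i ∈ T := Finset.mem_filter.mpr ⟨hi, h⟩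
          have := hi₀min i hiT
          have : r ≤ lam i / cE i := this
          have := (le_div_iff₀ h).mp this
          simp only [hmu]; linarith
      have hmui₀ : mu i₀ = 0 := by
        simp only [hmu, hr]
        field_simp
        ring
      have hsum : ∑ i ∈ s, mu i • v i = ∑ i ∈ s, lam i • v i := by
        simp only [hmu, sub_smul, Finset.sum_sub_distrib, mul_smul]
        rw [← Finset.smul_sum, hcE_sum, smul_zero, sub_zero]
      obtain ⟨t, hts, hind', mu', hmu', hsum'⟩ :=
        ih (s.erase i₀) (Finset.erase_ssubset hi₀s) mu
          (fun i hi => hmupos i (Finset.mem_of_mem_erase hi))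
      refine ⟨t, hts.trans (Finset.erase_subset _ _), hind', mu', hmu', ?_⟩
      rw [hsum', Finset.sum_erase _ (by rw [hmui₀, zero_smul]), hsum]
end Cone

section FG
variable {E : Type*} [NormedAddCommGroup E] [NormedSpace ℝ E]

def coneSet {κ : Type*} [Fintype κ] (v : κ → E) : Set E :=
  {x | ∃ lam : κ → ℝ, (∀ i, 0 ≤ lam i) ∧ x = ∑ i, lam i • v i}

lemma cone_caratheodory' {κ : Type*} [Fintype κ] [DecidableEq κ] (v : κ → E)
    (x : E) (hx : x ∈ coneSet v) :
    ∃ t : Finset κ, LinearIndependent ℝ (fun i : t => v (i : κ)) ∧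
      ∃ mu : t → ℝ, (∀ i, 0 ≤ mu i) ∧ x = ∑ i : t, mu i • v (i : κ) := by
  obtain ⟨lam, h0, rfl⟩ := hx
  obtain ⟨t, -, hind, mu, hmu, hsum⟩ := cone_caratheodory v Finset.univ lam (fun i _ => h0 i)
  refine ⟨t, hind, fun i => mu i, fun i => hmu i i.2, ?_⟩
  rw [← hsum]
  exact (Finset.sum_coe_sort t (fun i => mu i • v i)).symm

lemma coneSet_closed {κ : Type*} [Fintype κ] [DecidableEq κ] (v : κ → E) :
    IsClosed (coneSet v) := by
  have key : coneSet v = ⋃ (t : Finset κ) (_ : LinearIndependent ℝ (fun i : t => v (i : κ))),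
      (fun mu : t → ℝ => ∑ i : t, mu i • v (i : κ)) '' {mu | ∀ i, 0 ≤ mu i} := by
    ext x
    simp only [mem_iUnion, mem_image, mem_setOf_eq]
    constructor
    · intro hx
      obtain ⟨t, hind, mu, hmu, hx⟩ := cone_caratheodory' v x hx
      exact ⟨t, hind, mu, hmu, hx.symm⟩
    · rintro ⟨t, hind, mu, hmu, rfl⟩
      refine ⟨fun i => if h : i ∈ t then mu ⟨i, h⟩ else 0, fun i => ?_, ?_⟩
      · by_cases h : i ∈ t <;> simp [h, hmu _]
      · have h1 : ∑ i : κ, (fun i => if h : i ∈ t then mu ⟨i, h⟩ else 0) i • v i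
            = ∑ i ∈ t, (if h : i ∈ t then mu ⟨i, h⟩ else (0:ℝ)) • v i :=
          (Finset.sum_subset (Finset.subset_univ t)
            (fun i _ hi => by simp [dif_neg hi])).symm
        rw [h1, ← Finset.sum_coe_sort t
          (fun i => (if h : i ∈ t then mu ⟨i, h⟩ else (0:ℝ)) • v i)]
        exact Finset.sum_congr rfl (fun i _ => by simp [i.2])
  rw [key]
  apply isClosed_iUnion_of_finite
  intro t
  by_cases hind : LinearIndependent ℝ (fun i : t => v (i : κ))
  swap
  · simp [hind]
  rw [show (LinearIndependent ℝ fun i : t => v (i : κ)) = True from eq_true hind, Set.iUnion_true]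
  set T : (t → ℝ) →ₗ[ℝ] E :=
    ∑ i : t, (LinearMap.proj i).smulRight (v (i : κ)) with hT
  have hTapp : ∀ mu : t → ℝ, T mu = ∑ i : t, mu i • v (i : κ) := by
    intro mu
    rw [hT, LinearMap.sum_apply]
    exact Finset.sum_congr rfl (fun i _ => by simp)
  have hker : LinearMap.ker T = ⊥ := by
    rw [LinearMap.ker_eq_bot']
    intro m hm
    rw [hTapp] at hm
    exact funext (Fintype.linearIndependent_iff.mp hind m hm)
  have hce := LinearMap.isClosedEmbedding_of_injective hker
  have horth : IsClosed {mu : t → ℝ | ∀ i, 0 ≤ mu i} := by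
    have : {mu : t → ℝ | ∀ i, 0 ≤ mu i} = ⋂ i, {mu | 0 ≤ mu i} := by
      ext; simp [Set.mem_iInter]
    rw [this]
    exact isClosed_iInter (fun i => isClosed_le continuous_const (continuous_apply i))
  have heq : (fun mu : t → ℝ => ∑ i : t, mu i • v (i : κ)) '' {mu | ∀ i, 0 ≤ mu i}
      = ⇑T '' {mu | ∀ i, 0 ≤ mu i} := Set.image_congr (fun mu _ => (hTapp mu).symm)
  rw [heq]
  exact hce.isClosedMap _ horth

lemma coneSet_smul {κ : Type*} [Fintype κ] (v : κ → E)
    {c : ℝ} (hc : 0 ≤ c) {x : E} (hx : x ∈ coneSet v) : c • x ∈ coneSet v := by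
  obtain ⟨lam, h0, rfl⟩ := hx
  refine ⟨fun i => c * lam i, fun i => mul_nonneg hc (h0 i), ?_⟩
  rw [Finset.smul_sum]
  exact Finset.sum_congr rfl (fun i _ => by rw [smul_smul])

lemma coneSet_add {κ : Type*} [Fintype κ] (v : κ → E)
    {x y : E} (hx : x ∈ coneSet v) (hy : y ∈ coneSet v) : x + y ∈ coneSet v := by
  obtain ⟨lam, h0, rfl⟩ := hx
  obtain ⟨lam', h0', rfl⟩ := hy
  refine ⟨fun i => lam i + lam' i, fun i => add_nonneg (h0 i) (h0' i), ?_⟩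
  rw [← Finset.sum_add_distrib]
  exact Finset.sum_congr rfl (fun i _ => (add_smul _ _ _).symm)

def coneCC {κ : Type*} [Fintype κ] (v : κ → E) : ConvexCone ℝ E where
  carrier := coneSet v
  smul_mem' := fun c hc x hx => coneSet_smul v hc.le hx
  add_mem' := fun x hx y hy => coneSet_add v hx hy

lemma zero_mem_coneSet {κ : Type*} [Fintype κ] (v : κ → E) : (0 : E) ∈ coneSet v :=
  ⟨0, fun _ => le_refl _, by simp⟩

lemma single_mem_coneSet {κ : Type*} [Fintype κ] [DecidableEq κ] (v : κ → E) (i₀ : κ) :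
    v i₀ ∈ coneSet v := by
  refine ⟨fun i => if i = i₀ then 1 else 0, fun i => by positivity, ?_⟩
  rw [Finset.sum_eq_single i₀] <;> simp +contextual

end FG
section Farkas

open scoped InnerProductSpace

lemma farkas {V : Type*} [AddCommGroup V] [Module ℝ V] {ι : Type*} [Fintype ι]
    (f : ι → V →ₗ[ℝ] ℝ) (g : V →ₗ[ℝ] ℝ)
    (h : ∀ x, (∀ i, f i x ≤ 0) → g x ≤ 0) :
    ∃ lam : ι → ℝ, (∀ i, 0 ≤ lam i) ∧ ∀ x, g x = ∑ i, lam i * f i x := by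
  classical
  set E := EuclideanSpace ℝ (Option ι) with hE
  set T : V →ₗ[ℝ] E :=
    (WithLp.linearEquiv 2 ℝ (Option ι → ℝ)).symm.toLinearMap.comp
      (LinearMap.pi (fun o => Option.elim o g f)) with hT
  have hTnone : ∀ x, T x none = g x := fun x => rfl
  have hTsome : ∀ x i, T x (some i) = f i x := fun x i => rfl
  set U : Submodule ℝ E := LinearMap.range T with hU
  set r := Module.finrank ℝ Uᗮ with hr
  set bB : Module.Basis (Fin r) ℝ Uᗮ := Module.finBasis ℝ Uᗮ with hbB
  set vv : (ι ⊕ (Fin r ⊕ Fin r)) → E :=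
    Sum.elim (fun i => EuclideanSpace.single (some i) (1:ℝ))
      (Sum.elim (fun k => (bB k : E)) (fun k => -(bB k : E))) with hvv
  set b₀ : E := EuclideanSpace.single none (1:ℝ) with hb₀
  have hperp_mem : ∀ z (hz : z ∈ Uᗮ), z ∈ coneSet vv := by
    intro z hz
    set c : Fin r → ℝ := fun k => bB.repr ⟨z, hz⟩ k with hc
    have hzrep : z = ∑ k, c k • (bB k : E) := by
      have h1 := congrArg (Subtype.val) (bB.sum_repr ⟨z, hz⟩)
      simpa only [Submodule.coe_sum, Submodule.coe_smul] using h1.symm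
    refine ⟨Sum.elim (fun _ => 0)
      (Sum.elim (fun k => max (c k) 0) (fun k => max (-c k) 0)), ?_, ?_⟩
    · rintro (i | k | k) <;> simp [le_max_right]
    · rw [Fintype.sum_sum_type]
      simp only [Sum.elim_inl, Sum.elim_inr, zero_smul, Finset.sum_const_zero, zero_add]
      rw [Fintype.sum_sum_type, ← Finset.sum_add_distrib, hzrep]
      refine Finset.sum_congr rfl (fun k _ => ?_)
      simp only [Sum.elim_inl, Sum.elim_inr, hvv]
      rw [smul_neg, ← sub_eq_add_neg, ← sub_smul, max_zero_sub_max_neg_zero_eq_self]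
  have hinner_none : ∀ w : E, ⟪b₀, w⟫_ℝ = w none := by
    intro w
    rw [hb₀, EuclideanSpace.inner_single_left]
    simp
  have hinner_some : ∀ (i : ι) (w : E),
      ⟪EuclideanSpace.single (some i) (1:ℝ), w⟫_ℝ = w (some i) := by
    intro i w
    rw [EuclideanSpace.inner_single_left]
    simp
  have hperp_inner : ∀ z ∈ Uᗮ, ∀ x : V, ⟪z, T x⟫_ℝ = 0 := by
    intro z hz x
    have := (Submodule.mem_orthogonal U z).mp hz (T x) (LinearMap.mem_range_self T x)
    rwa [real_inner_comm] at this
  by_cases hb : b₀ ∈ coneSet vv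
  · obtain ⟨lam, h0, hbeq⟩ := hb
    refine ⟨fun i => lam (Sum.inl i), fun i => h0 _, ?_⟩
    intro x
    have hgx := congrArg (fun w : E => ⟪w, T x⟫_ℝ) hbeq
    rw [hinner_none (T x), hTnone] at hgx
    rw [sum_inner] at hgx
    rw [Fintype.sum_sum_type] at hgx
    have hinr : ∀ k : Fin r ⊕ Fin r, ⟪lam (Sum.inr k) • vv (Sum.inr k), T x⟫_ℝ = 0 := by
      rintro (k | k) <;>
      · rw [real_inner_smul_left]
        simp only [hvv, Sum.elim_inr, Sum.elim_inl]
        first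
        | rw [hperp_inner _ (bB k).2 x, mul_zero]
        | rw [inner_neg_left, hperp_inner _ (bB k).2 x, neg_zero, mul_zero]
    rw [Finset.sum_congr rfl (fun k _ => hinr k), Finset.sum_const_zero, add_zero] at hgx
    rw [hgx]
    refine Finset.sum_congr rfl (fun i _ => ?_)
    rw [real_inner_smul_left]
    simp only [hvv, Sum.elim_inl]
    rw [hinner_some i (T x), hTsome]
  · exfalso
    obtain ⟨y, hy1, hy2⟩ :=
      ProperCone.hyperplane_separation' (E := E)
        ({ carrier := coneSet vv, add_mem' := fun hx hy => coneSet_add vv hx hy,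
           zero_mem' := zero_mem_coneSet vv, smul_mem' := fun c _ hx => coneSet_smul vv c.2 hx,
           isClosed' := coneSet_closed vv } : ProperCone ℝ E) hb
    rw [real_inner_comm] at hy2
    have hyU : y ∈ U := by
      have hz0 : ∀ z ∈ Uᗮ, ⟪z, y⟫_ℝ = 0 := by
        intro z hz
        have h1 := hy1 _ (hperp_mem z hz)
        have h2 := hy1 _ (hperp_mem (-z) (neg_mem hz))
        rw [inner_neg_left] at h2
        linarith
      have : y ∈ Uᗮᗮ := (Submodule.mem_orthogonal Uᗮ y).mpr hz0
      rwa [Submodule.orthogonal_orthogonal] at this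
    obtain ⟨x, hx⟩ := hyU
    have h1 : ∀ i, f i (-x) ≤ 0 := by
      intro i
      have := hy1 _ (single_mem_coneSet vv (Sum.inl i))
      simp only [hvv, Sum.elim_inl] at this
      rw [hinner_some i y, ← hx, hTsome] at this
      rw [map_neg]
      linarith
    have h2 := h (-x) h1
    rw [map_neg] at h2
    have h3 : 0 ≤ y none := by rw [← hx, hTnone]; linarith
    rw [real_inner_comm, hinner_none] at hy2
    linarith
end Farkas
section Master
variable {Z : Type*} [AddCommGroup Z] [Module ℝ Z] [TopologicalSpace Z]

lemma master {ι : Type*} [Fintype ι] (f : ι → Z →L[ℝ] ℝ) (α : ι → ℝ)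
    (M : Submodule ℝ Z) (c : Z) (zb : Z)
    (hzb1 : ∀ i, f i zb ≤ α i) (hzb2 : zb - c ∈ M)
    (w : Z →L[ℝ] ℝ)
    (hw : ∀ z, (∀ i, f i z ≤ α i) → z - c ∈ M → w (z - zb) ≤ 0) :
    ∃ (lam : ι → ℝ) (h : Z →L[ℝ] ℝ), (∀ i, 0 ≤ lam i) ∧
      (∀ i, lam i ≠ 0 → f i zb = α i) ∧
      (∀ z ∈ M, h z = 0) ∧
      (∀ z, w z = (∑ i, lam i * f i z) + h z) := by
  classical
  -- feasible directions
  have hdir : ∀ d ∈ M, (∀ i : {i : ι // f i zb = α i}, f i.1 d ≤ 0) → w d ≤ 0 := by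
    intro d hdM hdact
    set B : Finset ι := Finset.univ.filter (fun i => 0 < f i d) with hB
    set R : Finset ℝ := insert 1 (B.image (fun i => (α i - f i zb) / f i d)) with hR
    have hRne : R.Nonempty := ⟨1, Finset.mem_insert_self _ _⟩
    set τ : ℝ := R.min' hRne with hτ
    have hmemR : ∀ x ∈ R, 0 < x := by
      intro x hx
      rcases Finset.mem_insert.mp hx with h1 | h2
      · rw [h1]; norm_num
      · obtain ⟨i, hiB, rfl⟩ := Finset.mem_image.mp h2
        have hid : 0 < f i d := (Finset.mem_filter.mp hiB).2
        have hia : f i zb ≠ α i := by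
          intro hact
          exact absurd (hdact ⟨i, hact⟩) (not_le.mpr hid)
        have : f i zb < α i := lt_of_le_of_ne (hzb1 i) hia
        exact div_pos (by linarith) hid
    have hτpos : 0 < τ := hmemR _ (R.min'_mem hRne)
    have hfeas : ∀ i, f i (zb + τ • d) ≤ α i := by
      intro i
      rw [map_add, map_smul, smul_eq_mul]
      rcases le_or_gt (f i d) 0 with hle | hlt
      · nlinarith [hzb1 i]
      · have hiB : i ∈ B := Finset.mem_filter.mpr ⟨Finset.mem_univ i, hlt⟩
        have := R.min'_le _ (Finset.mem_insert_of_mem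
          (Finset.mem_image_of_mem (fun i => (α i - f i zb) / f i d) hiB))
        rw [← hτ] at this
        have := (le_div_iff₀ hlt).mp this
        linarith
    have hmem : zb + τ • d - c ∈ M := by
      have : zb + τ • d - c = (zb - c) + τ • d := by abel
      rw [this]
      exact M.add_mem hzb2 (M.smul_mem τ hdM)
    have := hw _ hfeas hmem
    rw [add_sub_cancel_left, map_smul, smul_eq_mul] at this
    nlinarith
  -- Farkas on the subspace M
  obtain ⟨lam', hlam'0, hlam'⟩ := farkas
    (fun i : {i : ι // f i zb = α i} => ((f i.1).toLinearMap.comp M.subtype))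
    (w.toLinearMap.comp M.subtype)
    (fun m hm => hdir m.1 m.2 (fun i => hm i))
  set lam : ι → ℝ := fun i => if h : f i zb = α i then lam' ⟨i, h⟩ else 0 with hlam
  have hsplit : ∀ z : Z, ∑ i : ι, lam i * f i z
      = ∑ i : {i : ι // f i zb = α i}, lam' i * f i.1 z := by
    intro z
    rw [← Finset.sum_filter_of_ne
      (p := fun i => f i zb = α i) (fun i _ hne => by
        by_contra hna
        exact hne (by simp [hlam, dif_neg hna]))]
    rw [Finset.sum_subtype (p := fun i => f i zb = α i)
      (Finset.univ.filter (fun i => f i zb = α i))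
      (fun x => by simp) (fun i => lam i * f i z)]
    exact Finset.sum_congr rfl (fun i _ => by simp [hlam, dif_pos i.2])
  refine ⟨lam, w - ∑ i, lam i • f i, ?_, ?_, ?_, ?_⟩
  · intro i
    by_cases h : f i zb = α i <;> simp [hlam, h, hlam'0 _]
  · intro i hne
    by_contra hna
    exact hne (by simp [hlam, dif_neg hna])
  · intro z hz
    have := hlam' ⟨z, hz⟩
    simp only [LinearMap.comp_apply, Submodule.subtype_apply,
      ContinuousLinearMap.coe_coe] at this
    rw [ContinuousLinearMap.sub_apply, ContinuousLinearMap.sum_apply, sub_eq_zero, this,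
      ← hsplit]
    exact Finset.sum_congr rfl (fun i _ => by simp)
  · intro z
    rw [ContinuousLinearMap.sub_apply, ContinuousLinearMap.sum_apply]
    have : ∑ i, (lam i • f i) z = ∑ i, lam i * f i z :=
      Finset.sum_congr rfl (fun i _ => by rw [ContinuousLinearMap.smul_apply, smul_eq_mul])
    rw [this]
    ring
end Master

section KeyDecomp
open ContinuousLinearMap

lemma mem_vadd_sub {P : Type*} [AddCommGroup P] [Module ℝ P] {L : Submodule ℝ P} {a p : P} :
    p ∈ a +ᵥ (L : Set P) ↔ p - a ∈ L := by
  rw [Set.mem_vadd_set]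
  constructor
  · rintro ⟨l, hl, rfl⟩
    rw [vadd_eq_add]
    simpa using hl
  · intro h
    exact ⟨p - a, h, by rw [vadd_eq_add]; abel⟩

lemma key_decomp {P : Type*} [AddCommGroup P] [Module ℝ P] [TopologicalSpace P]
    (Eset : Set (P × ℝ)) (Gset : Set P)
    (hEG : (IsPolyhedral Eset ∧ IsGPolyhedral Gset) ∨ (IsGPolyhedral Eset ∧ IsPolyhedral Gset))
    (zb : P × ℝ) (hzbE : zb ∈ Eset) (hzbG : zb.1 ∈ Gset)
    (W : (P × ℝ) →L[ℝ] ℝ)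
    (hW : ∀ z ∈ Eset, z.1 ∈ Gset → W (z - zb) ≤ 0) :
    ∃ (Φ : (P × ℝ) →L[ℝ] ℝ) (Ψ : P →L[ℝ] ℝ),
      (∀ z ∈ Eset, Φ (z - zb) ≤ 0) ∧ (∀ p ∈ Gset, Ψ (p - zb.1) ≤ 0) ∧
      ∀ z : P × ℝ, W z = Φ z + Ψ z.1 := by
  rcases hEG with ⟨⟨m, fE, αE, hE⟩, PG, a, L, ⟨n, fG, αG, hPG⟩, -, hG⟩ |
    ⟨⟨PE, aE, LE, ⟨m, fE, αE, hPE⟩, -, hEe⟩, ⟨n, fG, αG, hGe⟩⟩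
  · -- epi polyhedral, gph generalized polyhedral
    set fC : (Fin m ⊕ Fin n) → (P × ℝ) →L[ℝ] ℝ :=
      Sum.elim fE (fun j => (fG j).comp (fst ℝ P ℝ)) with hfC
    set αC : (Fin m ⊕ Fin n) → ℝ := Sum.elim αE αG with hαC
    set M : Submodule ℝ (P × ℝ) := L.prod ⊤ with hM
    have hmemS : ∀ z : P × ℝ, (z ∈ Eset ∧ z.1 ∈ Gset) ↔
        ((∀ k, fC k z ≤ αC k) ∧ z - (a, (0:ℝ)) ∈ M) := by
      intro z
      simp only [hE, hG, hPG, Set.mem_inter_iff, Set.mem_setOf_eq, mem_vadd_sub]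
      constructor
      · rintro ⟨hz1, ⟨hz2, hz3⟩⟩
        refine ⟨fun k => ?_, Submodule.mem_prod.mpr ⟨hz3, trivial⟩⟩
        rcases k with i | j
        · exact hz1 i
        · exact hz2 j
      · rintro ⟨h1, h2⟩
        exact ⟨fun i => h1 (Sum.inl i), ⟨fun j => h1 (Sum.inr j),
          (Submodule.mem_prod.mp h2).1⟩⟩
    have hzbS := (hmemS zb).mp ⟨hzbE, hzbG⟩
    obtain ⟨lam, h, hlam0, hact, hvan, hdec⟩ := master fC αC M (a, (0:ℝ)) zb
      hzbS.1 hzbS.2 W (fun z h1 h2 => by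
        have := (hmemS z).mpr ⟨h1, h2⟩
        exact hW z this.1 this.2)
    set Ψh : P →L[ℝ] ℝ := h.comp (inl ℝ P ℝ) with hΨh
    have hzero : ∀ z : P × ℝ, h z = Ψh z.1 := by
      intro z
      have h2 : h (0, z.2) = 0 := hvan _ (Submodule.mem_prod.mpr ⟨L.zero_mem, trivial⟩)
      have hz : z = (z.1, (0:ℝ)) + (0, z.2) := by simp
      rw [hz, map_add, h2, add_zero, hΨh]
      simp
    have hactE : ∀ i, lam (Sum.inl i) ≠ 0 → fE i zb = αE i := by
      intro i h0
      have := hact _ h0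
      simpa [hfC, hαC] using this
    have hactG : ∀ j, lam (Sum.inr j) ≠ 0 → fG j zb.1 = αG j := by
      intro j h0
      have := hact _ h0
      simpa [hfC, hαC] using this
    refine ⟨∑ i, lam (Sum.inl i) • fE i,
      (∑ j, lam (Sum.inr j) • fG j) + Ψh, ?_, ?_, ?_⟩
    · intro z hz
      rw [hE] at hz
      rw [ContinuousLinearMap.sum_apply]
      refine Finset.sum_nonpos (fun i _ => ?_)
      rw [ContinuousLinearMap.smul_apply, smul_eq_mul]
      rcases eq_or_ne (lam (Sum.inl i)) 0 with h0 | h0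
      · rw [h0, zero_mul]
      · apply mul_nonpos_of_nonneg_of_nonpos (hlam0 _)
        rw [map_sub, hactE i h0]
        linarith [hz i]
    · intro p hp
      rw [hG, hPG] at hp
      obtain ⟨hp1, hp2⟩ := hp
      rw [mem_vadd_sub] at hp2
      have hzb1 : ∀ j, fG j zb.1 ≤ αG j := by
        have := (hG ▸ hzbG).1
        rwa [hPG] at this
      have hzb2 : zb.1 - a ∈ L := by
        have := (hG ▸ hzbG).2
        rwa [mem_vadd_sub] at this
      rw [ContinuousLinearMap.add_apply, ContinuousLinearMap.sum_apply]
      have hΨh0 : Ψh (p - zb.1) = 0 := by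
        rw [hΨh, ContinuousLinearMap.comp_apply, inl_apply]
        refine hvan _ (Submodule.mem_prod.mpr ⟨?_, trivial⟩)
        have := L.sub_mem hp2 hzb2
        rwa [sub_sub_sub_cancel_right] at this
      rw [hΨh0, add_zero]
      refine Finset.sum_nonpos (fun j _ => ?_)
      rw [ContinuousLinearMap.smul_apply, smul_eq_mul]
      rcases eq_or_ne (lam (Sum.inr j)) 0 with h0 | h0
      · rw [h0, zero_mul]
      · apply mul_nonpos_of_nonneg_of_nonpos (hlam0 _)
        rw [map_sub, hactG j h0]
        linarith [hp1 j]
    · intro z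
      rw [hdec z, hzero z]
      rw [ContinuousLinearMap.add_apply, ContinuousLinearMap.sum_apply,
        ContinuousLinearMap.sum_apply, Fintype.sum_sum_type]
      have e1 : ∀ i, lam (Sum.inl i) * fC (Sum.inl i) z = (lam (Sum.inl i) • fE i) z :=
        fun i => by simp [hfC]
      have e2 : ∀ j, lam (Sum.inr j) * fC (Sum.inr j) z = (lam (Sum.inr j) • fG j) z.1 :=
        fun j => by simp [hfC]
      rw [Finset.sum_congr rfl (fun i _ => e1 i), Finset.sum_congr rfl (fun j _ => e2 j)]
      ring
  · -- epi generalized polyhedral, gph polyhedral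
    set fC : (Fin m ⊕ Fin n) → (P × ℝ) →L[ℝ] ℝ :=
      Sum.elim fE (fun j => (fG j).comp (fst ℝ P ℝ)) with hfC
    set αC : (Fin m ⊕ Fin n) → ℝ := Sum.elim αE αG with hαC
    have hmemS : ∀ z : P × ℝ, (z ∈ Eset ∧ z.1 ∈ Gset) ↔
        ((∀ k, fC k z ≤ αC k) ∧ z - aE ∈ LE) := by
      intro z
      simp only [hEe, hPE, hGe, Set.mem_inter_iff, Set.mem_setOf_eq, mem_vadd_sub]
      constructor
      · rintro ⟨⟨hz1, hz2⟩, hz3⟩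
        refine ⟨fun k => ?_, hz2⟩
        rcases k with i | j
        · exact hz1 i
        · exact hz3 j
      · rintro ⟨h1, h2⟩
        exact ⟨⟨fun i => h1 (Sum.inl i), h2⟩, fun j => h1 (Sum.inr j)⟩
    have hzbS := (hmemS zb).mp ⟨hzbE, hzbG⟩
    obtain ⟨lam, h, hlam0, hact, hvan, hdec⟩ := master fC αC LE aE zb
      hzbS.1 hzbS.2 W (fun z h1 h2 => by
        have := (hmemS z).mpr ⟨h1, h2⟩
        exact hW z this.1 this.2)
    have hactE : ∀ i, lam (Sum.inl i) ≠ 0 → fE i zb = αE i := by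
      intro i h0
      have := hact _ h0
      simpa [hfC, hαC] using this
    have hactG : ∀ j, lam (Sum.inr j) ≠ 0 → fG j zb.1 = αG j := by
      intro j h0
      have := hact _ h0
      simpa [hfC, hαC] using this
    refine ⟨(∑ i, lam (Sum.inl i) • fE i) + h,
      ∑ j, lam (Sum.inr j) • fG j, ?_, ?_, ?_⟩
    · intro z hz
      rw [hEe, hPE] at hz
      obtain ⟨hz1, hz2⟩ := hz
      rw [mem_vadd_sub] at hz2
      have hzb1 : ∀ i, fE i zb ≤ αE i := by
        have := (hEe ▸ hzbE).1
        rwa [hPE] at this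
      have hzb2 : zb - aE ∈ LE := by
        have := (hEe ▸ hzbE).2
        rwa [mem_vadd_sub] at this
      rw [ContinuousLinearMap.add_apply, ContinuousLinearMap.sum_apply]
      have hh0 : h (z - zb) = 0 := by
        refine hvan _ ?_
        have := LE.sub_mem hz2 hzb2
        rwa [sub_sub_sub_cancel_right] at this
      rw [hh0, add_zero]
      refine Finset.sum_nonpos (fun i _ => ?_)
      rw [ContinuousLinearMap.smul_apply, smul_eq_mul]
      rcases eq_or_ne (lam (Sum.inl i)) 0 with h0 | h0
      · rw [h0, zero_mul]
      · apply mul_nonpos_of_nonneg_of_nonpos (hlam0 _)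
        rw [map_sub, hactE i h0]
        linarith [hz1 i]
    · intro p hp
      rw [hGe] at hp
      have hzb1 : ∀ j, fG j zb.1 ≤ αG j := by
        have := hGe ▸ hzbG
        exact this
      rw [ContinuousLinearMap.sum_apply]
      refine Finset.sum_nonpos (fun j _ => ?_)
      rw [ContinuousLinearMap.smul_apply, smul_eq_mul]
      rcases eq_or_ne (lam (Sum.inr j)) 0 with h0 | h0
      · rw [h0, zero_mul]
      · apply mul_nonpos_of_nonneg_of_nonpos (hlam0 _)
        rw [map_sub, hactG j h0]
        linarith [hp j]
    · intro z
      rw [hdec z]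
      rw [ContinuousLinearMap.add_apply, ContinuousLinearMap.sum_apply,
        ContinuousLinearMap.sum_apply, Fintype.sum_sum_type]
      have e1 : ∀ i, lam (Sum.inl i) * fC (Sum.inl i) z = (lam (Sum.inl i) • fE i) z :=
        fun i => by simp [hfC]
      have e2 : ∀ j, lam (Sum.inr j) * fC (Sum.inr j) z = (lam (Sum.inr j) • fG j) z.1 :=
        fun j => by simp [hfC]
      rw [Finset.sum_congr rfl (fun i _ => e1 i), Finset.sum_congr rfl (fun j _ => e2 j)]
      ring
end KeyDecomp

theorem subdifferential_optimal_value_function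
    (φ : X × Y → EReal) (F : X → Set Y)
    (hφbot : ∀ p, φ p ≠ ⊥)
    (hμbot : ∀ x, (⨅ y ∈ F x, φ (x, y)) ≠ ⊥)
    (hFφ : (IsPolyhedral (epi φ) ∧ IsGPolyhedral (gph F)) ∨
           (IsGPolyhedral (epi φ) ∧ IsPolyhedral (gph F)))
    (xb : X) (yb : Y) (hyb : yb ∈ F xb)
    (hdom : (⨅ y ∈ F xb, φ (xb, y)) ≠ ⊤)
    (hopt : (⨅ y ∈ F xb, φ (xb, y)) = φ (xb, yb)) :
    subdiff (fun x => ⨅ y ∈ F x, φ (x, y)) xb =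
      {w : X →L[ℝ] ℝ | ∃ (u : X →L[ℝ] ℝ) (v : Y →L[ℝ] ℝ),
        (∀ x : X, ∀ y : Y,
          ((u (x - xb) + v (y - yb) : ℝ) : EReal) + φ (xb, yb) ≤ φ (x, y)) ∧
        ∃ d ∈ coderiv F xb yb v, w = u + d} := by
  have hμtop : φ (xb, yb) ≠ ⊤ := hopt ▸ hdom
  have hμbot' : φ (xb, yb) ≠ ⊥ := hφbot _
  set tb : ℝ := (φ (xb, yb)).toReal with htb
  have hcoe : (tb : EReal) = φ (xb, yb) := EReal.coe_toReal hμtop hμbot'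
  ext w
  simp only [subdiff, Set.mem_setOf_eq]
  constructor
  · intro hw
    set W : ((X × Y) × ℝ) →L[ℝ] ℝ :=
      w.comp ((ContinuousLinearMap.fst ℝ X Y).comp (ContinuousLinearMap.fst ℝ (X × Y) ℝ))
        - ContinuousLinearMap.snd ℝ (X × Y) ℝ with hWdef
    have hWapp : ∀ z : (X × Y) × ℝ, W z = w z.1.1 - z.2 := fun z => by
      simp [hWdef]
    set zb : (X × Y) × ℝ := ((xb, yb), tb) with hzb
    have hzbE : zb ∈ epi φ := by
      simp only [epi, Set.mem_setOf_eq, hzb, hcoe]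
      exact le_refl _
    have hzbG : zb.1 ∈ gph F := hyb
    have hWle : ∀ z ∈ epi φ, z.1 ∈ gph F → W (z - zb) ≤ 0 := by
      intro z hzE hzG
      have h1 : (⨅ y ∈ F z.1.1, φ (z.1.1, y)) ≤ φ z.1 := by
        have h0 : (⨅ y ∈ F z.1.1, φ (z.1.1, y)) ≤ φ (z.1.1, z.1.2) :=
          iInf₂_le z.1.2 hzG
        simpa using h0
      have h2 := hw z.1.1
      rw [hopt] at h2
      have hzE' : φ z.1 ≤ (z.2 : EReal) := hzE
      have h3 : ((w (z.1.1 - xb) : ℝ) : EReal) + (tb : EReal) ≤ (z.2 : EReal) :=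
        le_trans (by rw [hcoe]; exact h2) (le_trans h1 hzE')
      rw [← EReal.coe_add, EReal.coe_le_coe_iff] at h3
      have h4 : W (z - zb) = w (z.1.1 - xb) - (z.2 - tb) := by
        rw [hWapp]
        simp [hzb]
      rw [h4]
      linarith
    obtain ⟨Φ, Ψ, hΦ, hΨ, hsum⟩ := key_decomp (epi φ) (gph F) hFφ zb hzbE hzbG W hWle
    set d : X →L[ℝ] ℝ := Ψ.comp (ContinuousLinearMap.inl ℝ X Y) with hd
    set v : Y →L[ℝ] ℝ := -(Ψ.comp (ContinuousLinearMap.inr ℝ X Y)) with hv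
    set u : X →L[ℝ] ℝ := w - d with hu
    have hΨsplit : ∀ (x : X) (y : Y), Ψ (x, y) = d x - v y := by
      intro x y
      have hxy : (x, y) = ((x, (0:Y)) + ((0:X), y)) := by simp
      rw [hxy, map_add, hd, hv]
      simp
    have hkey : ∀ (p : X × Y) (t : ℝ), w p.1 - t = Φ (p, t) + Ψ p := by
      intro p t
      have := hsum (p, t)
      rw [hWapp] at this
      exact this
    have hA : ∀ (p : X × Y) (t : ℝ), Φ (p, t) = Φ (p, 0) - t := by
      intro p t
      have h1 := hkey p t
      have h2 := hkey p 0
      linarith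
    have hval : ∀ x : X, w x = Φ ((x, (0:Y)), (0:ℝ)) + Ψ (x, 0) := by
      intro x
      have := hkey (x, (0:Y)) 0
      simpa using this
    have hval2 : ∀ y : Y, 0 = Φ (((0:X), y), (0:ℝ)) + Ψ (0, y) := by
      intro y
      have := hkey ((0:X), y) 0
      simpa using this
    have hu1 : ∀ x : X, u x = Φ ((x, (0:Y)), (0:ℝ)) := by
      intro x
      have h4 := hval x
      have hΨd : Ψ (x, (0:Y)) = d x := by
        rw [hΨsplit]
        have : v (0:Y) = 0 := map_zero v
        rw [this, sub_zero]
      rw [hu, ContinuousLinearMap.sub_apply]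
      linarith
    have hv1 : ∀ y : Y, v y = Φ (((0:X), y), (0:ℝ)) := by
      intro y
      have h4 := hval2 y
      have hΨv : Ψ ((0:X), y) = - v y := by
        rw [hΨsplit]
        have : d (0:X) = 0 := map_zero d
        rw [this, zero_sub]
      linarith
    refine ⟨u, v, ?_, d, ?_, ?_⟩
    · intro x y
      rcases eq_or_ne (φ (x, y)) ⊤ with htop | htop
      · rw [htop]; exact le_top
      set s : ℝ := (φ (x, y)).toReal with hs
      have hscoe : (s : EReal) = φ (x, y) := EReal.coe_toReal htop (hφbot _)
      have hin : ((x, y), s) ∈ epi φ := by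
        simp only [epi, Set.mem_setOf_eq, hscoe]
        exact le_refl _
      have h1 := hΦ _ hin
      have hdiff : ((x, y), s) - zb = ((x - xb, y - yb), s - tb) := by
        simp [hzb, Prod.sub_def]
      rw [hdiff, hA] at h1
      have h3 : Φ ((x - xb, y - yb), (0:ℝ))
          = Φ ((x - xb, (0:Y)), 0) + Φ (((0:X), y - yb), 0) := by
        rw [← map_add]
        norm_num
      have hfin : u (x - xb) + v (y - yb) + tb ≤ s := by
        rw [hu1, hv1]
        linarith
      calc ((u (x - xb) + v (y - yb) : ℝ) : EReal) + φ (xb, yb)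
          = ((u (x - xb) + v (y - yb) + tb : ℝ) : EReal) := by
            rw [← hcoe, ← EReal.coe_add]
        _ ≤ (s : EReal) := EReal.coe_le_coe_iff.mpr hfin
        _ = φ (x, y) := hscoe
    · simp only [coderiv, Set.mem_setOf_eq]
      intro x y hy
      have h5 : Ψ ((x, y) - zb.1) ≤ 0 := hΨ (x, y) hy
      have heq : ((x, y) : X × Y) - zb.1 = (x - xb, y - yb) := by
        simp [hzb, Prod.sub_def]
      rw [heq, hΨsplit] at h5
      exact h5
    · rw [hu]
      ext x
      simp
  · rintro ⟨u, v, huv, d, hdc, rfl⟩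
    intro x
    rw [hopt]
    refine le_iInf₂ (fun y hy => ?_)
    have h1 := huv x y
    have h2 := hdc x y hy
    have h3 : (u + d) (x - xb) ≤ u (x - xb) + v (y - yb) := by
      rw [ContinuousLinearMap.add_apply]
      linarith
    calc (((u + d) (x - xb) : ℝ) : EReal) + φ (xb, yb)
        ≤ ((u (x - xb) + v (y - yb) : ℝ) : EReal) + φ (xb, yb) :=
          add_le_add_left (EReal.coe_le_coe_iff.mpr h3) _
      _ ≤ φ (x, y) := h1
end
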